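/- Let S ⊆ ℝ^d, η > 0, ε ≥ 0, T ≥ 1, and let x_1, …, x_{T+1} ∈ ℝ^d and f_1, …, f_T ∈ ℝ^d be sequences such that for every t ∈ {1,…,T} and every z ∈ S: ‖z − x_{t+1}‖² ≤ ‖z − (x_t − η f_t)‖² + 2ε. Then for every x ∈ S: (1/T)·Σ_{t=1}^T x_t·f_t − (1/T)·Σ_{t=1}^T x·f_t ≤ ‖x_1 − x‖²/(2Tη) + (η/(2T))·Σ_{t=1}^T ‖f_t‖² + ε/η. -/

import Mathlib

open scoped RealInnerProductSpace

/-- Regret guarantee of online gradient descent with ε-approximated infeasible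
projections (the KKL scheme), for linear losses. -/
theorem ogd_approx_infeasible_projections {d : ℕ}
    (S : Set (EuclideanSpace ℝ (Fin d))) (η ε : ℝ) (T : ℕ)
    (hη : 0 < η) (hε : 0 ≤ ε) (hT : 1 ≤ T)
    (x f : ℕ → EuclideanSpace ℝ (Fin d))
    (hproj : ∀ t ∈ Finset.Icc 1 T, ∀ z ∈ S,
      ‖z - x (t + 1)‖ ^ 2 ≤ ‖z - (x t - η • f t)‖ ^ 2 + 2 * ε) :
    ∀ xs ∈ S,
      (1 / (T : ℝ)) * ∑ t ∈ Finset.Icc 1 T, ⟪x t, f t⟫ -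
        (1 / (T : ℝ)) * ∑ t ∈ Finset.Icc 1 T, ⟪xs, f t⟫ ≤
      ‖x 1 - xs‖ ^ 2 / (2 * (T : ℝ) * η) +
        (η / (2 * (T : ℝ))) * ∑ t ∈ Finset.Icc 1 T, ‖f t‖ ^ 2 + ε / η := by
  intro xs hxs
  have hTpos : (0 : ℝ) < T := by exact_mod_cast Nat.lt_of_lt_of_le Nat.zero_lt_one hT
  -- per-step bound
  have step : ∀ t ∈ Finset.Icc 1 T,
      ⟪x t, f t⟫ - ⟪xs, f t⟫ ≤
        (‖xs - x t‖ ^ 2 - ‖xs - x (t + 1)‖ ^ 2) / (2 * η)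
          + η / 2 * ‖f t‖ ^ 2 + ε / η := by
    intro t ht
    have h := hproj t ht xs hxs
    have hexp : ‖xs - (x t - η • f t)‖ ^ 2
        = ‖xs - x t‖ ^ 2 + 2 * η * ⟪xs - x t, f t⟫ + η ^ 2 * ‖f t‖ ^ 2 := by
      have : xs - (x t - η • f t) = (xs - x t) + η • f t := by abel
      rw [this, norm_add_sq_real, real_inner_smul_right, norm_smul]
      simp [mul_pow, abs_of_pos hη]
      ring
    have hinner : ⟪xs - x t, f t⟫ = ⟪xs, f t⟫ - ⟪x t, f t⟫ := by
      rw [inner_sub_left]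
    rw [hexp, hinner] at h
    have h2η : (0:ℝ) < 2 * η := by linarith
    rw [← sub_nonneg]
    have key : (‖xs - x t‖ ^ 2 - ‖xs - x (t + 1)‖ ^ 2) / (2 * η) + η / 2 * ‖f t‖ ^ 2
        + ε / η - (⟪x t, f t⟫ - ⟪xs, f t⟫)
        = (‖xs - x t‖ ^ 2 + 2 * η * (⟪xs, f t⟫ - ⟪x t, f t⟫) + η ^ 2 * ‖f t‖ ^ 2
            + 2 * ε - ‖xs - x (t + 1)‖ ^ 2) / (2 * η) := by
      field_simp
      ring
    rw [key]
    apply div_nonneg (by linarith) (by linarith)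
  have hsum := Finset.sum_le_sum step
  have htel : ∑ t ∈ Finset.Icc 1 T, (‖xs - x t‖ ^ 2 - ‖xs - x (t + 1)‖ ^ 2)
      = ‖xs - x 1‖ ^ 2 - ‖xs - x (T + 1)‖ ^ 2 := by
    rw [← Finset.Ico_add_one_right_eq_Icc, Finset.sum_Ico_eq_sum_range]
    simp only [Nat.add_sub_cancel]
    have h := Finset.sum_range_sub' (f := fun i => ‖xs - x (1 + i)‖ ^ 2) T
    simpa [add_assoc, add_comm] using h
  have hrhs : ∑ t ∈ Finset.Icc 1 T,
      ((‖xs - x t‖ ^ 2 - ‖xs - x (t + 1)‖ ^ 2) / (2 * η) + η / 2 * ‖f t‖ ^ 2 + ε / η)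
      = (‖xs - x 1‖ ^ 2 - ‖xs - x (T + 1)‖ ^ 2) / (2 * η)
        + η / 2 * ∑ t ∈ Finset.Icc 1 T, ‖f t‖ ^ 2 + T * (ε / η) := by
    rw [Finset.sum_add_distrib, Finset.sum_add_distrib, ← Finset.sum_div, htel,
      ← Finset.mul_sum, Finset.sum_const, Nat.card_Icc, nsmul_eq_mul]
    simp [hT]
  have hT0 : (T : ℝ) ≠ 0 := ne_of_gt hTpos
  calc (1 / (T : ℝ)) * ∑ t ∈ Finset.Icc 1 T, ⟪x t, f t⟫ -
        (1 / (T : ℝ)) * ∑ t ∈ Finset.Icc 1 T, ⟪xs, f t⟫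
      = (1 / (T : ℝ)) * ∑ t ∈ Finset.Icc 1 T, (⟪x t, f t⟫ - ⟪xs, f t⟫) := by
        rw [← mul_sub, ← Finset.sum_sub_distrib]
    _ ≤ (1 / (T : ℝ)) * ((‖xs - x 1‖ ^ 2 - ‖xs - x (T + 1)‖ ^ 2) / (2 * η)
        + η / 2 * ∑ t ∈ Finset.Icc 1 T, ‖f t‖ ^ 2 + T * (ε / η)) := by
        rw [← hrhs]
        exact mul_le_mul_of_nonneg_left hsum (by positivity)
    _ ≤ (1 / (T : ℝ)) * (‖xs - x 1‖ ^ 2 / (2 * η)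
        + η / 2 * ∑ t ∈ Finset.Icc 1 T, ‖f t‖ ^ 2 + T * (ε / η)) := by
        have h2η : (0:ℝ) < 2 * η := by linarith
        refine mul_le_mul_of_nonneg_left ?_ (by positivity)
        have hb : (0:ℝ) ≤ ‖xs - x (T + 1)‖ ^ 2 := sq_nonneg _
        apply add_le_add_left
        apply add_le_add_left
        exact (div_le_div_iff_of_pos_right h2η).mpr (by linarith)
    _ = ‖x 1 - xs‖ ^ 2 / (2 * (T : ℝ) * η) +
        (η / (2 * (T : ℝ))) * ∑ t ∈ Finset.Icc 1 T, ‖f t‖ ^ 2 + ε / η := by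
        rw [norm_sub_rev]
        field_simp
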